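/- Any solution of the N-peg puzzle uses at least N² + 2N moves. -/

import Mathlib

/-- A cell of the puzzle: a blue peg, a red peg, or an empty hole. -/
inductive Cell
  | B : Cell
  | R : Cell
  | O : Cell
  deriving DecidableEq

open Cell

/-- A step: a peg (of either color) moves into the adjacent empty hole. -/
def StepMove (c d : List Cell) : Prop :=
  ∃ x y p, p ≠ O ∧
    ((c = x ++ p :: O :: y ∧ d = x ++ O :: p :: y) ∨
     (c = x ++ O :: p :: y ∧ d = x ++ p :: O :: y))

/-- A jump: a peg jumps over a single adjacent peg into the empty hole. -/
def JumpMove (c d : List Cell) : Prop :=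
  ∃ x y p q, p ≠ O ∧ q ≠ O ∧
    ((c = x ++ p :: q :: O :: y ∧ d = x ++ O :: q :: p :: y) ∨
     (c = x ++ O :: q :: p :: y ∧ d = x ++ p :: q :: O :: y))

/-- A legal move of the puzzle: a step or a jump. -/
def PegMove (c d : List Cell) : Prop := StepMove c d ∨ JumpMove c d

/-- Initial configuration `BᴺORᴺ`. -/
def startCfg (N : ℕ) : List Cell := List.replicate N B ++ O :: List.replicate N R

/-- Final configuration `RᴺOBᴺ`. -/
def finishCfg (N : ℕ) : List Cell := List.replicate N R ++ O :: List.replicate N B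

/-- `IsSolution N L f` : `f 0, f 1, …, f L` is a sequence of configurations
beginning at `BᴺORᴺ`, ending at `RᴺOBᴺ`, each obtained from the previous one
by a legal move; it uses `L` moves. -/
def IsSolution (N L : ℕ) (f : ℕ → List Cell) : Prop :=
  f 0 = startCfg N ∧ f L = finishCfg N ∧ ∀ t < L, PegMove (f t) (f (t + 1))

namespace PegAux

def isPeg : Cell → Bool
  | O => false
  | _ => true

@[simp] lemma isPeg_O : isPeg O = false := rfl
@[simp] lemma isPeg_B : isPeg B = true := rfl
@[simp] lemma isPeg_R : isPeg R = true := rfl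

lemma isPeg_of_ne {p : Cell} (hp : p ≠ O) : isPeg p = true := by
  cases p <;> simp at hp ⊢

def cB (w : List Cell) : ℕ := w.count B
def cR (w : List Cell) : ℕ := w.count R

@[simp] lemma cB_nil : cB [] = 0 := rfl
@[simp] lemma cR_nil : cR [] = 0 := rfl
@[simp] lemma cB_append (u v : List Cell) : cB (u ++ v) = cB u + cB v := List.count_append
@[simp] lemma cR_append (u v : List Cell) : cR (u ++ v) = cR u + cR v := List.count_append
@[simp] lemma cB_cons (a : Cell) (l : List Cell) :
    cB (a :: l) = (if a = B then 1 else 0) + cB l := by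
  simp [cB, List.count_cons]; cases a <;> simp <;> omega
@[simp] lemma cR_cons (a : Cell) (l : List Cell) :
    cR (a :: l) = (if a = R then 1 else 0) + cR l := by
  simp [cR, List.count_cons]; cases a <;> simp <;> omega
@[simp] lemma cB_replicate_B (n : ℕ) : cB (List.replicate n B) = n := by
  simp [cB, List.count_replicate]
@[simp] lemma cB_replicate_R (n : ℕ) : cB (List.replicate n R) = 0 := by
  simp [cB, List.count_replicate]
@[simp] lemma cR_replicate_B (n : ℕ) : cR (List.replicate n B) = 0 := by
  simp [cR, List.count_replicate]
@[simp] lemma cR_replicate_R (n : ℕ) : cR (List.replicate n R) = n := by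
  simp [cR, List.count_replicate]

def Inv : List Cell → ℕ
  | [] => 0
  | a :: l => (if a = B then cR l else 0) + Inv l

lemma Inv_append (u v : List Cell) : Inv (u ++ v) = Inv u + Inv v + cB u * cR v := by
  induction u with
  | nil => simp [Inv]
  | cons a u ih =>
    simp only [List.cons_append, Inv, ih, cR_append, cB_cons]
    cases a <;> simp [ih] <;> ring

@[simp] lemma Inv_replicate_B (n : ℕ) : Inv (List.replicate n B) = 0 := by
  induction n with
  | zero => rfl
  | succ n ih => simp [List.replicate_succ, Inv, ih]

@[simp] lemma Inv_replicate_R (n : ℕ) : Inv (List.replicate n R) = 0 := by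
  induction n with
  | zero => rfl
  | succ n ih => simp [List.replicate_succ, Inv, ih]

lemma inv_swap (u v : List Cell) (p q : Cell) :
    Inv (u ++ p :: q :: v) ≤ Inv (u ++ q :: p :: v) + 1 := by
  have h1 : cR (p :: q :: v) = cR (q :: p :: v) := by simp; ring
  rw [Inv_append, Inv_append, h1]
  have : Inv (p :: q :: v) ≤ Inv (q :: p :: v) + 1 := by
    simp only [Inv]
    cases p <;> cases q <;> simp [cR_cons] <;> omega
  omega

end PegAux
namespace PegAux

def zc (m : ℕ) (w : List Cell) : ℕ := cB (w.take m)

lemma zc_mono_succ (m : ℕ) (w : List Cell) :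
    zc m w ≤ zc (m+1) w ∧ zc (m+1) w ≤ zc m w + 1 := by
  unfold zc
  rw [List.take_succ]
  rcases h : w[m]? with _ | a
  · simp
  · cases a <;> simp

lemma zc_swap_ne (m : ℕ) (u v : List Cell) (p q : Cell) (hm : m ≠ u.length + 1) :
    zc m (u ++ p :: q :: v) = zc m (u ++ q :: p :: v) := by
  unfold zc
  rw [List.take_append, List.take_append]
  rcases hr : m - u.length with _ | r
  · simp [hr]
  · rcases r with _ | r
    · omega
    · have h1 : (p :: q :: v).take (r+1+1) = p :: q :: v.take r := by simp
      have h2 : (q :: p :: v).take (r+1+1) = q :: p :: v.take r := by simp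
      rw [h1, h2]
      simp only [cB_append, cB_cons]
      omega

lemma zc_swap_at (u v : List Cell) (p q : Cell) :
    zc (u.length + 1) (u ++ p :: q :: v) = cB u + (if p = B then 1 else 0) := by
  unfold zc
  rw [List.take_append]
  have h1 : u.length + 1 - u.length = 1 := by omega
  rw [h1, List.take_of_length_le (by simp)]
  simp

lemma takeWhile_peg_append (x l : List Cell) (hx : ∀ a ∈ x, isPeg a = true) :
    (x ++ l).takeWhile isPeg = x ++ l.takeWhile isPeg := by
  induction x with
  | nil => simp
  | cons a x ih =>
    have ha : isPeg a = true := hx a (by simp)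
    simp only [List.cons_append, List.takeWhile_cons, ha]
    simp [ih (fun b hb => hx b (by simp [hb]))]

def wrd (c : List Cell) : List Cell := c.filter isPeg
def kOf (c : List Cell) : ℕ := (c.takeWhile isPeg).length

lemma pegs_of_countO {x : List Cell} (hx : x.count O = 0) : ∀ a ∈ x, isPeg a = true := by
  intro a ha
  have : a ≠ O := by rintro rfl; exact absurd (List.count_eq_zero.mp hx) (by simp [ha])
  exact isPeg_of_ne this

lemma filter_pegs {x : List Cell} (hx : x.count O = 0) : x.filter isPeg = x :=
  List.filter_eq_self.mpr (pegs_of_countO hx)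

end PegAux
namespace PegAux

lemma move_data {c d : List Cell} (hm : PegMove c d) (hc : c.count O = 1) :
    d.count O = 1 ∧
    ((wrd d = wrd c ∧ (kOf d = kOf c + 1 ∨ kOf c = kOf d + 1)) ∨
     (∃ u v p q, wrd c = u ++ p :: q :: v ∧ wrd d = u ++ q :: p :: v ∧
        ((kOf c = u.length ∧ kOf d = u.length + 2) ∨
         (kOf c = u.length + 2 ∧ kOf d = u.length)))) := by
  rcases hm with ⟨x, y, p, hp, hcase⟩ | ⟨x, y, p, q, hp, hq, hcase⟩
  · -- step
    rcases hcase with ⟨rfl, rfl⟩ | ⟨rfl, rfl⟩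
    · simp only [List.count_append, List.count_cons, beq_iff_eq] at hc
      rw [if_neg hp] at hc
      simp at hc
      obtain ⟨hx, hy⟩ : x.count O = 0 ∧ y.count O = 0 := by omega
      have hpx := pegs_of_countO hx
      refine ⟨?_, Or.inl ⟨?_, Or.inr ?_⟩⟩
      · simp only [List.count_append, List.count_cons, beq_iff_eq]
        rw [if_neg hp]; simp [hx, hy]
      · simp [wrd, List.filter_append, isPeg_of_ne hp]
      · simp [kOf, takeWhile_peg_append _ _ hpx, List.takeWhile_cons, isPeg_of_ne hp]
    · simp only [List.count_append, List.count_cons, beq_iff_eq] at hc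
      rw [if_neg hp] at hc
      simp at hc
      obtain ⟨hx, hy⟩ : x.count O = 0 ∧ y.count O = 0 := by omega
      have hpx := pegs_of_countO hx
      refine ⟨?_, Or.inl ⟨?_, Or.inl ?_⟩⟩
      · simp only [List.count_append, List.count_cons, beq_iff_eq]
        rw [if_neg hp]; simp [hx, hy]
      · simp [wrd, List.filter_append, isPeg_of_ne hp]
      · simp [kOf, takeWhile_peg_append _ _ hpx, List.takeWhile_cons, isPeg_of_ne hp]
  · -- jump
    rcases hcase with ⟨rfl, rfl⟩ | ⟨rfl, rfl⟩
    · simp only [List.count_append, List.count_cons, beq_iff_eq] at hc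
      rw [if_neg hp, if_neg hq] at hc
      simp at hc
      obtain ⟨hx, hy⟩ : x.count O = 0 ∧ y.count O = 0 := by omega
      have hpx := pegs_of_countO hx
      refine ⟨?_, Or.inr ⟨x, y.filter isPeg, p, q, ?_, ?_, Or.inr ⟨?_, ?_⟩⟩⟩
      · simp only [List.count_append, List.count_cons, beq_iff_eq]
        rw [if_neg hp, if_neg hq]; simp [hx, hy]
      · simp [wrd, List.filter_append, isPeg_of_ne hp, isPeg_of_ne hq, filter_pegs hx]
      · simp [wrd, List.filter_append, isPeg_of_ne hp, isPeg_of_ne hq, filter_pegs hx]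
      · simp [kOf, takeWhile_peg_append _ _ hpx, List.takeWhile_cons, isPeg_of_ne hp,
          isPeg_of_ne hq]
      · simp [kOf, takeWhile_peg_append _ _ hpx, List.takeWhile_cons, isPeg_of_ne hp,
          isPeg_of_ne hq]
    · simp only [List.count_append, List.count_cons, beq_iff_eq] at hc
      rw [if_neg hp, if_neg hq] at hc
      simp at hc
      obtain ⟨hx, hy⟩ : x.count O = 0 ∧ y.count O = 0 := by omega
      have hpx := pegs_of_countO hx
      refine ⟨?_, Or.inr ⟨x, y.filter isPeg, q, p, ?_, ?_, Or.inl ⟨?_, ?_⟩⟩⟩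
      · simp only [List.count_append, List.count_cons, beq_iff_eq]
        rw [if_neg hp, if_neg hq]; simp [hx, hy]
      · simp [wrd, List.filter_append, isPeg_of_ne hp, isPeg_of_ne hq, filter_pegs hx]
      · simp [wrd, List.filter_append, isPeg_of_ne hp, isPeg_of_ne hq, filter_pegs hx]
      · simp [kOf, takeWhile_peg_append _ _ hpx, List.takeWhile_cons, isPeg_of_ne hp,
          isPeg_of_ne hq]
      · simp [kOf, takeWhile_peg_append _ _ hpx, List.takeWhile_cons, isPeg_of_ne hp,
          isPeg_of_ne hq]

end PegAux
namespace PegAux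

def MoveHyp (L : ℕ) (W : ℕ → List Cell) (K : ℕ → ℕ) : Prop :=
  ∀ t < L, (W (t+1) = W t ∧ (K (t+1) = K t + 1 ∨ K t = K (t+1) + 1)) ∨
     (∃ u v p q, W t = u ++ p :: q :: v ∧ W (t+1) = u ++ q :: p :: v ∧
        ((K t = u.length ∧ K (t+1) = u.length + 2) ∨
         (K t = u.length + 2 ∧ K (t+1) = u.length)))

lemma jumps_bound (L : ℕ) (W : ℕ → List Cell) (K : ℕ → ℕ) (hd : MoveHyp L W K) :
    (Inv (W 0) : ℤ) ≤ Inv (W L) +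
      ∑ τ ∈ Finset.range L, (1 - (if K (τ+1) % 2 = K τ % 2 then (0:ℤ) else 1)) := by
  have main : ∀ t ≤ L, (Inv (W 0) : ℤ) ≤ Inv (W t) +
      ∑ τ ∈ Finset.range t, (1 - (if K (τ+1) % 2 = K τ % 2 then (0:ℤ) else 1)) := by
    intro t
    induction t with
    | zero => intro _; simp
    | succ t ih =>
      intro ht
      have h1 := ih (by omega)
      rw [Finset.sum_range_succ]
      rcases hd t (by omega) with ⟨hWeq, hK⟩ | ⟨u, v, p, q, hWt, hWt1, hK⟩
      · have hstp : (if K (t+1) % 2 = K t % 2 then (0:ℤ) else 1) = 1 := by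
          rcases hK with h | h <;> rw [if_neg (by omega)]
        rw [hWeq, hstp]
        linarith
      · have hstp : (if K (t+1) % 2 = K t % 2 then (0:ℤ) else 1) = 0 := by
          rcases hK with ⟨h1', h2'⟩ | ⟨h1', h2'⟩ <;> rw [if_pos (by omega)]
        have hinv : Inv (W t) ≤ Inv (W (t+1)) + 1 := by
          rw [hWt, hWt1]; exact inv_swap u v p q
        rw [hstp]
        push_cast
        linarith
  exact main L le_rfl

def Apot (M : ℕ) (W : ℕ → List Cell) (K : ℕ → ℕ) (t : ℕ) : ℤ :=
  (∑ τ ∈ Finset.range t, (if K (τ+1) % 2 = K τ % 2 then (0:ℤ) else 1))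
  + 2 * (zc (M+1) (W t))
  + (if K t % 2 = M % 2 then 1 - 2*((zc (M+1) (W t) : ℤ) - (zc M (W t) : ℤ)) else 0)

lemma Apot_mono (M L : ℕ) (W : ℕ → List Cell) (K : ℕ → ℕ) (hd : MoveHyp L W K) :
    ∀ t ≤ L, Apot M W K 0 ≤ Apot M W K t := by
  intro t
  induction t with
  | zero => intro _; exact le_refl _
  | succ t ih =>
    intro ht
    refine le_trans (ih (by omega)) ?_
    unfold Apot
    rw [Finset.sum_range_succ]
    have hq := zc_mono_succ M (W t)
    have hq' := zc_mono_succ M (W (t+1))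
    rcases hd t (by omega) with ⟨hWeq, hK⟩ | ⟨u, v, p, q, hWt, hWt1, hK⟩
    · rw [hWeq]
      rcases hK with h | h <;>
      · split_ifs <;> push_cast <;> omega
    · have hpar : K (t+1) % 2 = K t % 2 := by
        rcases hK with ⟨h1', h2'⟩ | ⟨h1', h2'⟩ <;> omega
      have hKu : K t % 2 = u.length % 2 := by
        rcases hK with ⟨h1', h2'⟩ | ⟨h1', h2'⟩ <;> omega
      by_cases hu : u.length = M
      · -- swap at the critical pair
        have hz : zc (M+1) (W t) = cB u + (if p = B then 1 else 0) := by
          rw [hWt, ← hu]; exact zc_swap_at u v p q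
        have hz' : zc (M+1) (W (t+1)) = cB u + (if q = B then 1 else 0) := by
          rw [hWt1, ← hu]; exact zc_swap_at u v q p
        have hy : zc M (W t) = zc M (W (t+1)) := by
          rw [hWt, hWt1]; exact zc_swap_ne M u v p q (by omega)
        have hact : K t % 2 = M % 2 := by omega
        rw [hz, hz', hy, hpar]
        simp only [if_pos hact, if_pos (show K t % 2 = K t % 2 from rfl)]
        split_ifs <;> push_cast <;> omega
      · have hz : zc (M+1) (W t) = zc (M+1) (W (t+1)) := by
          rw [hWt, hWt1]; exact zc_swap_ne (M+1) u v p q (by omega)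
        by_cases hact : K t % 2 = M % 2
        · have hy : zc M (W t) = zc M (W (t+1)) := by
            rw [hWt, hWt1]
            exact zc_swap_ne M u v p q (by omega)
          rw [hz, hy, hpar]
          simp only [if_pos hact, if_pos (show K t % 2 = K t % 2 from rfl)]
          omega
        · rw [hz, hpar, if_neg hact, if_neg hact, if_pos (by omega)]
          omega
  
end PegAux
namespace PegAux

lemma count_O_replicate {n : ℕ} {a : Cell} (ha : a ≠ O) :
    (List.replicate n a).count O = 0 := by
  rw [List.count_replicate]
  simp only [beq_iff_eq, ite_eq_right_iff]
  intro h; first | exact absurd h ha | exact absurd h.symm ha | exact absurd (Eq.symm h) (fun hh => ha hh)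

lemma wrd_k_block (n : ℕ) (a b : Cell) (ha : a ≠ O) (hb : b ≠ O) :
    wrd (List.replicate n a ++ O :: List.replicate n b)
      = List.replicate n a ++ List.replicate n b ∧
    kOf (List.replicate n a ++ O :: List.replicate n b) = n := by
  have hca := count_O_replicate (n := n) ha
  have hcb := count_O_replicate (n := n) hb
  constructor
  · unfold wrd
    rw [List.filter_append, filter_pegs hca]
    simp [filter_pegs hcb]
  · unfold kOf
    rw [takeWhile_peg_append _ _ (pegs_of_countO hca)]
    simp

theorem main_aux (M L : ℕ) (f : ℕ → List Cell) (h : IsSolution (M+1) L f) :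
    (M+1)^2 + 2*(M+1) ≤ L := by
  obtain ⟨h0, hL, hmv⟩ := h
  have hcount : ∀ t, t ≤ L → (f t).count O = 1 := by
    intro t
    induction t with
    | zero =>
      intro _
      rw [h0]; unfold startCfg
      simp [List.count_append, List.count_cons, count_O_replicate]
    | succ t ih =>
      intro ht
      exact (move_data (hmv t (by omega)) (ih (by omega))).1
  have hd : MoveHyp L (fun t => wrd (f t)) (fun t => kOf (f t)) := by
    intro t ht
    exact (move_data (hmv t ht) (hcount t (by omega))).2
  obtain ⟨hW0, hK0⟩ := wrd_k_block (M+1) B R (by simp) (by simp)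
  obtain ⟨hWL, hKL⟩ := wrd_k_block (M+1) R B (by simp) (by simp)
  have hW0' : wrd (f 0) = List.replicate (M+1) B ++ List.replicate (M+1) R := by
    rw [h0]; exact hW0
  have hWL' : wrd (f L) = List.replicate (M+1) R ++ List.replicate (M+1) B := by
    rw [hL]; exact hWL
  have hK0' : kOf (f 0) = M + 1 := by rw [h0]; exact hK0
  have hKL' : kOf (f L) = M + 1 := by rw [hL]; exact hKL
  have hI0 : Inv (wrd (f 0)) = (M+1)*(M+1) := by
    rw [hW0', Inv_append]
    simp [cB, cR, List.count_replicate]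
  have hIL : Inv (wrd (f L)) = 0 := by
    rw [hWL', Inv_append]
    simp [cB, cR, List.count_replicate]
  have hz0 : zc (M+1) (wrd (f 0)) = M+1 := by
    rw [hW0']; unfold zc
    rw [List.take_append]
    simp [List.take_replicate]
  have hzL : zc (M+1) (wrd (f L)) = 0 := by
    rw [hWL']; unfold zc
    rw [List.take_append]
    simp [List.take_replicate]
  have c1 := jumps_bound L (fun t => wrd (f t)) (fun t => kOf (f t)) hd
  have c2 := Apot_mono M L (fun t => wrd (f t)) (fun t => kOf (f t)) hd L le_rfl
  rw [hI0, hIL] at c1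
  unfold Apot at c2
  simp only [Finset.range_zero, Finset.sum_empty, zero_add] at c2
  rw [hK0', hKL', hz0, hzL] at c2
  rw [if_neg (by omega : ¬ (M+1) % 2 = M % 2), if_neg (by omega : ¬ (M+1) % 2 = M % 2)] at c2
  have hsplit : ∑ τ ∈ Finset.range L,
      (1 - (if kOf (f (τ+1)) % 2 = kOf (f τ) % 2 then (0:ℤ) else 1))
      = L - ∑ τ ∈ Finset.range L,
        (if kOf (f (τ+1)) % 2 = kOf (f τ) % 2 then (0:ℤ) else 1) := by
    rw [Finset.sum_sub_distrib]
    simp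
  rw [hsplit] at c1
  have hfin : ((M+1)^2 + 2*(M+1) : ℤ) ≤ (L : ℤ) := by
    have e1 : ((M+1)*(M+1) : ℤ) = ((M+1):ℤ)^2 := by ring
    push_cast at c1 c2 ⊢
    nlinarith [c1, c2]
  exact_mod_cast hfin

end PegAux

/-- Any solution of the `N`-peg puzzle uses at least `N² + 2N` moves. -/
theorem lower_bound (N L : ℕ) (f : ℕ → List Cell) (h : IsSolution N L f) :
    N ^ 2 + 2 * N ≤ L := by
  rcases N with _ | M
  · simpa using Nat.zero_le L
  · exact PegAux.main_aux M L f h
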